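/- For real matrices A, B of size m×n, one has A Aᵀ = B Bᵀ if and only if there exists an orthogonal n×n matrix U with A = B * U. -/

import Mathlib

open Matrix

private lemma toEuclideanLin_mul {m n k : ℕ} (M : Matrix (Fin m) (Fin n) ℝ)
    (N : Matrix (Fin n) (Fin k) ℝ) :
    Matrix.toEuclideanLin (M * N) =
      (Matrix.toEuclideanLin M) ∘ₗ (Matrix.toEuclideanLin N) := by
  simp [Matrix.toEuclideanLin_eq_toLin, Matrix.toLin_mul _ (PiLp.basisFun 2 ℝ (Fin n))]

theorem orth_equivalence {m n : ℕ} (A B : Matrix (Fin m) (Fin n) ℝ) :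
    A * Aᵀ = B * Bᵀ ↔ ∃ U : Matrix (Fin n) (Fin n) ℝ, U * Uᵀ = 1 ∧ A = B * U := by
  constructor
  · intro h
    set f := Matrix.toEuclideanLin Aᵀ with hf
    set g := Matrix.toEuclideanLin Bᵀ with hg
    -- inner products agree
    have inner_mulVec : ∀ (C : Matrix (Fin m) (Fin n) ℝ)
        (x y : EuclideanSpace ℝ (Fin m)),
        (inner ℝ (Matrix.toEuclideanLin Cᵀ x) (Matrix.toEuclideanLin Cᵀ y) : ℝ)
          = ((WithLp.equiv 2 _ x) ⬝ᵥ ((C * Cᵀ) *ᵥ (WithLp.equiv 2 _ y))) := by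
      intro C x y
      rw [PiLp.inner_apply]
      simp only [RCLike.inner_apply', starRingEnd_apply, star_trivial]
      show ((Cᵀ *ᵥ (WithLp.equiv 2 _ x)) ⬝ᵥ (Cᵀ *ᵥ (WithLp.equiv 2 _ y))) = _
      rw [← Matrix.mulVec_mulVec]
      rw [show (Cᵀ *ᵥ (WithLp.equiv 2 _ x)) = ((WithLp.equiv 2 _ x) ᵥ* C) from
        (Matrix.mulVec_transpose C _)]
      rw [← Matrix.dotProduct_mulVec]
    have key : ∀ x y : EuclideanSpace ℝ (Fin m), (inner ℝ (f x) (f y) : ℝ) = inner ℝ (g x) (g y) := by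
      intro x y
      rw [hf, hg, inner_mulVec, inner_mulVec, h]
    have hker : LinearMap.ker g ≤ LinearMap.ker f := by
      intro x hx
      rw [LinearMap.mem_ker] at hx ⊢
      have h1 : (inner ℝ (f x) (f x) : ℝ) = 0 := by rw [key, hx, inner_zero_right]
      exact inner_self_eq_zero.mp h1
    -- build the isometry on the range of g
    set S := LinearMap.range g with hS
    set hmap : S →ₗ[ℝ] EuclideanSpace ℝ (Fin n) :=
      ((LinearMap.ker g).liftQ f hker) ∘ₗ (g.quotKerEquivRange.symm : S →ₗ[ℝ] _) with hmap_def
    have hmap_apply : ∀ (x : EuclideanSpace ℝ (Fin m)) (hx : g x ∈ S),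
        hmap ⟨g x, hx⟩ = f x := by
      intro x hx
      have e1 : g.quotKerEquivRange (Submodule.Quotient.mk x) = ⟨g x, hx⟩ := by
        exact Subtype.ext (LinearMap.quotKerEquivRange_apply_mk g x)
      have e2 : g.quotKerEquivRange.symm ⟨g x, hx⟩ = Submodule.Quotient.mk x := by
        rw [← e1, LinearEquiv.symm_apply_apply]
      simp only [hmap_def, LinearMap.coe_comp, Function.comp_apply, LinearEquiv.coe_coe, e2]
      rfl
    have hnorm : ∀ s : S, ‖hmap s‖ = ‖s‖ := by
      rintro ⟨v, hv⟩
      obtain ⟨x, rfl⟩ := hv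
      rw [hmap_apply x (LinearMap.mem_range_self g x)]
      rw [Submodule.coe_norm]
      have h1 : ‖f x‖ ^ 2 = ‖g x‖ ^ 2 := by
        rw [← real_inner_self_eq_norm_sq, ← real_inner_self_eq_norm_sq, key]
      have := congrArg Real.sqrt h1
      rwa [Real.sqrt_sq (norm_nonneg _), Real.sqrt_sq (norm_nonneg _)] at this
    set L : S →ₗᵢ[ℝ] EuclideanSpace ℝ (Fin n) := ⟨hmap, hnorm⟩ with hL
    set V := L.extend with hV
    have hVg : ∀ x, V (g x) = f x := by
      intro x
      have : g x = ((⟨g x, LinearMap.mem_range_self g x⟩ : S) : EuclideanSpace ℝ (Fin n)) := rfl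
      rw [this, L.extend_apply]
      exact hmap_apply x _
    set W := Matrix.toEuclideanLin.symm V.toLinearMap with hW
    have hWlin : Matrix.toEuclideanLin W = V.toLinearMap := by
      rw [hW, LinearEquiv.apply_symm_apply]
    have hWB : W * Bᵀ = Aᵀ := by
      apply Matrix.toEuclideanLin.injective
      rw [toEuclideanLin_mul, hWlin, ← hg, ← hf]
      exact LinearMap.ext hVg
    have hWW : Wᵀ * W = 1 := by
      ext i j
      have h1 := V.inner_map_map (EuclideanSpace.single i 1) (EuclideanSpace.single j 1)
      have h2 : ∀ k : Fin n, V (EuclideanSpace.single k 1)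
          = (WithLp.equiv 2 _).symm (fun l => W l k) := by
        intro k
        have : V (EuclideanSpace.single k 1) = Matrix.toEuclideanLin W (EuclideanSpace.single k 1) := by
          rw [hWlin]; rfl
        rw [this, Matrix.toEuclideanLin_apply]
        congr 1
        have : (EuclideanSpace.single k (1 : ℝ)).ofLp = Pi.single k 1 := rfl
        rw [this, Matrix.mulVec_single]
        simp
        rfl
      rw [h2, h2] at h1
      rw [PiLp.inner_apply] at h1
      simp only [RCLike.inner_apply', starRingEnd_apply, star_trivial] at h1
      rw [EuclideanSpace.inner_single_left] at h1
      simp only [_root_.map_one, one_mul] at h1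
      have h3 : (Wᵀ * W) i j = ∑ k, W k i * W k j := by
        simp [Matrix.mul_apply, Matrix.transpose_apply]
      rw [h3]
      have h4 : (∑ k, W k i * W k j : ℝ)
          = ∑ k, ((WithLp.equiv 2 (Fin n → ℝ)).symm (fun l => W l i)) k
              * ((WithLp.equiv 2 (Fin n → ℝ)).symm (fun l => W l j)) k := rfl
      rw [h4, h1]
      by_cases hij : i = j <;> simp [hij, EuclideanSpace.single, Matrix.one_apply, Eq.comm]
    refine ⟨Wᵀ, ?_, ?_⟩
    · rw [Matrix.transpose_transpose]; exact hWW
    · have := congrArg Matrix.transpose hWB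
      rw [Matrix.transpose_mul, Matrix.transpose_transpose, Matrix.transpose_transpose] at this
      exact this.symm
  · rintro ⟨U, hU, rfl⟩
    rw [Matrix.transpose_mul, Matrix.mul_assoc, ← Matrix.mul_assoc U, hU, Matrix.one_mul]
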